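/- For a subset A of an infinite group G, A is not scattered if and only if A contains a piecewise shifted FP-set. -/

import Mathlib

/-- An ultrafilter is free if every member is infinite (it contains no finite set). -/
def IsFreeUltra {G : Type*} (p : Ultrafilter G) : Prop :=
  ∀ A : Set G, A ∈ p → A.Infinite

/-- The ultracompanion `Δ_p(A) = {gp : g ∈ G, A ∈ gp}`, where `gp` is the image of
`p` under left translation by `g`. -/
def Ultracompanion {G : Type*} [Group G] (p : Ultrafilter G) (A : Set G) :
    Set (Ultrafilter G) :=
  {q | ∃ g : G, q = Ultrafilter.map (fun x => g * x) p ∧ A ∈ q}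

/-- A subset `A` of `G` is scattered if for every infinite `X ⊆ A` there is a free
ultrafilter `p` with `X ∈ p` such that `Δ_p(X)` is finite. -/
def IsScatteredSub {G : Type*} [Group G] (A : Set G) : Prop :=
  ∀ X : Set G, X ⊆ A → X.Infinite →
    ∃ p : Ultrafilter G, IsFreeUltra p ∧ X ∈ p ∧ (Ultracompanion p X).Finite

/-- The (right) piecewise shifted FP-set of sequences `g`, `b`:
`{g i₁ * g i₂ * ⋯ * g iₙ * b iₙ : n ≥ 1, i₁ < i₂ < … < iₙ}`. -/
def PiecewiseShiftedFP {G : Type*} [Group G] (g b : ℕ → G) : Set G :=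
  {x | ∃ l : List ℕ, ∃ h : l ≠ [], l.Chain' (· < ·) ∧
    x = (l.map g).prod * b (l.getLast h)}

open Filter List

attribute [local instance] Ultrafilter.mul Ultrafilter.semigroup

section Proof

variable {G : Type*} [Group G]

lemma pairwise_lt_sublist_range : ∀ (n : ℕ) (l : List ℕ), l.Pairwise (· < ·) →
    (∀ x ∈ l, x < n) → l.Sublist (List.range n) := by
  intro n
  induction n with
  | zero => intro l _ hb; cases l with
    | nil => simp
    | cons a t => exact absurd (hb a (by simp)) (by omega)
  | succ n ih =>
    intro l hp hb
    rcases l.eq_nil_or_concat with rfl | ⟨l', a, rfl⟩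
    · simp
    rw [List.concat_eq_append] at *
    rcases Nat.lt_succ_iff_lt_or_eq.1 (hb a (by simp)) with h | rfl
    · have : ∀ x ∈ l' ++ [a], x < n := by
        intro x hx
        rcases List.mem_append.1 hx with hx | hx
        · have := (List.pairwise_append.1 hp).2.2 x hx a (by simp)
          omega
        · simp at hx; omega
      exact (ih _ hp this).trans (by rw [List.range_succ]; exact List.sublist_append_left _ _)
    · rw [List.range_succ]
      refine List.Sublist.append (ih _ (List.pairwise_append.1 hp).1 ?_) (List.Sublist.refl _)
      intro x hx
      exact (List.pairwise_append.1 hp).2.2 x hx a (by simp)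

lemma exists_free_ultra {X : Set α} (hX : X.Infinite) :
    ∃ p : Ultrafilter α, (∀ B : Set α, B ∈ p → B.Infinite) ∧ X ∈ p := by
  have hne : (Filter.cofinite ⊓ Filter.principal X).NeBot := by
    rw [Filter.inf_principal_neBot_iff]
    intro U hU
    rw [Filter.mem_cofinite] at hU
    obtain ⟨x, hx⟩ := (hX.diff hU).nonempty
    exact ⟨x, not_not.1 hx.2, hx.1⟩
  obtain ⟨p, hp⟩ := Filter.exists_ultrafilter_le (Filter.cofinite ⊓ Filter.principal X)
  refine ⟨p, fun B hB => ?_, hp (Filter.mem_inf_of_right (Filter.mem_principal_self X))⟩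
  by_contra hfin
  rw [Set.not_infinite] at hfin
  have hc : Bᶜ ∈ p := hp (Filter.mem_inf_of_left (by rwa [Filter.mem_cofinite, compl_compl]))
  obtain ⟨x, hx⟩ := Filter.nonempty_of_mem (Filter.inter_mem hB hc)
  exact hx.2 hx.1

lemma exists_coloring {h : G} (hh : h ≠ 1) : ∃ f : G → Fin 3, ∀ x, f (h * x) ≠ f x := by
  classical
  let s : Setoid G := ⟨fun a b => ∃ k : ℤ, b = h ^ k * a,
    ⟨fun a => ⟨0, by simp⟩,
     fun {a b} ⟨k, hk⟩ => ⟨-k, by rw [hk]; group⟩,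
     fun {a b c} ⟨k, hk⟩ ⟨m, hm⟩ => ⟨m + k, by rw [hm, hk]; group⟩⟩⟩
  let rep : G → G := fun x => (Quotient.mk s x).out
  have hrep : ∀ x : G, ∃ k : ℤ, x = h ^ k * rep x := fun x => Quotient.mk_out (s := s) x
  have hrepmul : ∀ x : G, rep (h * x) = rep x := by
    intro x
    show (Quotient.mk s (h * x)).out = (Quotient.mk s x).out
    congr 1
    exact Quotient.sound ⟨-1, by group⟩
  let K : G → ℤ := fun x => (hrep x).choose
  have hK : ∀ x, x = h ^ (K x) * rep x := fun x => (hrep x).choose_spec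
  by_cases hford : IsOfFinOrder h
  · -- finite order n ≥ 2
    set n : ℕ := orderOf h with hn
    have hn0 : 0 < n := hford.orderOf_pos
    have hn1 : n ≠ 1 := fun e => hh (orderOf_eq_one_iff.1 e)
    have hn2 : 2 ≤ n := by omega
    let M : G → ℤ := fun x => K x % (n : ℤ)
    have hMn : ∀ x, 0 ≤ M x ∧ M x < n := fun x =>
      ⟨Int.emod_nonneg _ (by exact_mod_cast hn0.ne'), Int.emod_lt_of_pos _ (by exact_mod_cast hn0)⟩
    have hM : ∀ x, x = h ^ (M x) * rep x := by
      intro x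
      conv_lhs => rw [hK x]
      rw [show h ^ (M x) = h ^ (K x) from zpow_mod_orderOf h (K x)]
    have huniq : ∀ a b : ℤ, 0 ≤ a → a < n → 0 ≤ b → b < n → h ^ a = h ^ b → a = b := by
      intro a b ha0 han hb0 hbn hab
      have h1 : h ^ a.toNat = h ^ b.toNat := by
        rw [← zpow_natCast, ← zpow_natCast, Int.toNat_of_nonneg ha0, Int.toNat_of_nonneg hb0]
        exact hab
      have := pow_injOn_Iio_orderOf (x := h) (by simp [Set.mem_Iio]; omega)
        (by simp [Set.mem_Iio]; omega) h1
      omega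
    have hMmul : ∀ x, M (h * x) = (M x + 1) % (n : ℤ) := by
      intro x
      have e1 : h * x = h ^ ((M x + 1) % (n : ℤ)) * rep (h * x) := by
        rw [hrepmul, zpow_mod_orderOf, zpow_add, zpow_one]
        conv_lhs => rw [hM x]
        group
      have e2 := hM (h * x)
      refine huniq _ _ (hMn _).1 (hMn _).2 (Int.emod_nonneg _ (by exact_mod_cast hn0.ne'))
        (Int.emod_lt_of_pos _ (by exact_mod_cast hn0)) ?_
      exact mul_right_cancel (e2.symm.trans e1)
    refine ⟨fun x => if M x = (n : ℤ) - 1 then 2 else if M x % 2 = 0 then 0 else 1, fun x => ?_⟩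
    have hb := hMmul x
    have ha := hMn x
    have hb2 := hMn (h * x)
    show (if M (h*x) = (n : ℤ) - 1 then (2 : Fin 3) else if M (h*x) % 2 = 0 then 0 else 1) ≠
      (if M x = (n : ℤ) - 1 then (2 : Fin 3) else if M x % 2 = 0 then 0 else 1)
    by_cases c1 : M x = (n : ℤ) - 1
    · have h0 : M (h * x) = 0 := by rw [hb, c1]; simp
      rw [if_neg (by omega), if_pos (by omega : M (h*x) % 2 = 0), if_pos c1]
      decide
    · have hb' : M (h * x) = M x + 1 := by
        rw [hb]; exact Int.emod_eq_of_lt (by omega) (by omega)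
      by_cases c3 : M (h * x) = (n : ℤ) - 1
      · rw [if_pos c3, if_neg c1]
        by_cases c : M x % 2 = 0
        · rw [if_pos c]; decide
        · rw [if_neg c]; decide
      · rw [if_neg c3, if_neg c1]
        by_cases c : M x % 2 = 0
        · rw [if_pos c, if_neg (by omega)]; decide
        · rw [if_neg c, if_pos (by omega)]; decide
  · -- infinite order
    have hinj : Function.Injective (fun k : ℤ => h ^ k) :=
      injective_zpow_iff_not_isOfFinOrder.2 hford
    have hKmul : ∀ x, K (h * x) = K x + 1 := by
      intro x
      have e1 : h * x = h ^ (K x + 1) * rep (h * x) := by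
        rw [hrepmul, zpow_add, zpow_one]
        conv_lhs => rw [hK x]
        group
      have e2 := hK (h * x)
      exact hinj (mul_right_cancel (e2.symm.trans e1))
    refine ⟨fun x => if K x % 2 = 0 then 0 else 1, fun x => ?_⟩
    have hx := hKmul x
    show (if K (h*x) % 2 = 0 then (0 : Fin 3) else 1) ≠ (if K x % 2 = 0 then (0 : Fin 3) else 1)
    by_cases c : K x % 2 = 0
    · rw [if_pos c, if_neg (by omega)]; decide
    · rw [if_neg c, if_pos (by omega)]; decide

lemma map_mul_left_injective (p : Ultrafilter G) :
    Function.Injective (fun h : G => Ultrafilter.map (fun x => h * x) p) := by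
  intro a b hab
  simp only at hab
  by_contra hne
  have hk : a * b⁻¹ ≠ 1 := by
    intro e
    exact hne (by rwa [mul_inv_eq_one] at e)
  obtain ⟨f, hf⟩ := exists_coloring hk
  have hcover : ∃ i : Fin 3, {x | f (b * x) = i} ∈ p := by
    by_contra hno
    push_neg at hno
    have h0 : {x | f (b * x) = 0}ᶜ ∈ p := (Ultrafilter.compl_mem_iff_notMem).2 (hno 0)
    have h1 : {x | f (b * x) = 1}ᶜ ∈ p := (Ultrafilter.compl_mem_iff_notMem).2 (hno 1)
    have h2 : {x | f (b * x) = 2}ᶜ ∈ p := (Ultrafilter.compl_mem_iff_notMem).2 (hno 2)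
    obtain ⟨x, hx⟩ := Filter.nonempty_of_mem (Filter.inter_mem (Filter.inter_mem h0 h1) h2)
    obtain ⟨⟨hx0, hx1⟩, hx2⟩ := hx
    have := hx0
    rcases (by decide : ∀ v : Fin 3, v = 0 ∨ v = 1 ∨ v = 2) (f (b * x)) with e | e | e
    exacts [hx0 e, hx1 e, hx2 e]
  obtain ⟨i, hi⟩ := hcover
  have h1 : {y | f y = i} ∈ Ultrafilter.map (fun x => b * x) p := by
    rw [Ultrafilter.mem_map]; exact hi
  rw [← hab, Ultrafilter.mem_map] at h1
  obtain ⟨x, hxa, hxb⟩ := Filter.nonempty_of_mem (Filter.inter_mem h1 hi)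
  have he : a * x = (a * b⁻¹) * (b * x) := by group
  have hne2 := hf (b * x)
  have : f (a * x) = i := hxa
  rw [he] at this
  rw [this] at hne2
  exact hne2 hxb.symm

lemma exists_good_subseq (g : ℕ → G) (hg : Function.Injective g) :
    ∃ e : ℕ → ℕ, StrictMono e ∧
      ∀ l : List ℕ, l ≠ [] → l.Chain' (· < ·) → ((l.map e).map g).prod ≠ 1 := by
  classical
  have spec : ∀ prev : List ℕ, ∃ v : ℕ, (∀ i ∈ prev, i < v) ∧
      ∀ l : List ℕ, l.Sublist prev → (l.map g).prod * g v ≠ 1 := by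
    intro prev
    have hbad : {v : ℕ | g v ∈ ((fun l : List ℕ => ((l.map g).prod)⁻¹) '' {l | l.Sublist prev})}.Finite := by
      apply Set.Finite.preimage hg.injOn
      apply Set.Finite.image
      refine Set.Finite.subset (prev.sublists.toFinset).finite_toSet ?_
      intro l hl
      simpa [List.mem_sublists] using hl
    have hfin : ({v : ℕ | g v ∈ ((fun l : List ℕ => ((l.map g).prod)⁻¹) '' {l | l.Sublist prev})}
        ∪ {v : ℕ | ∃ i ∈ prev, v ≤ i}).Finite := by
      refine hbad.union ?_
      refine Set.Finite.subset (Set.Finite.biUnion prev.toFinset.finite_toSet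
        (fun i _ => Set.finite_Iic i)) ?_
      rintro v ⟨i, hi, hvi⟩
      exact Set.mem_biUnion (by simpa using hi) hvi
    obtain ⟨v, hv⟩ := hfin.infinite_compl.nonempty
    rw [Set.mem_compl_iff, Set.mem_union, not_or] at hv
    refine ⟨v, fun i hi => ?_, fun l hl h1 => ?_⟩
    · by_contra hle
      exact hv.2 ⟨i, hi, by omega⟩
    · exact hv.1 ⟨l, hl, (eq_inv_of_mul_eq_one_right h1).symm⟩
  let pick : List ℕ → ℕ := fun prev => (spec prev).choose
  let E : ℕ → List ℕ := fun n => Nat.rec [] (fun _ ih => ih ++ [pick ih]) n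
  let e : ℕ → ℕ := fun n => pick (E n)
  have hE : ∀ n, E (n + 1) = E n ++ [e n] := fun n => rfl
  have hpick1 : ∀ prev, ∀ i ∈ prev, i < pick prev := fun prev => (spec prev).choose_spec.1
  have hpick2 : ∀ (prev : List ℕ) (l : List ℕ), l.Sublist prev → (l.map g).prod * g (pick prev) ≠ 1 :=
    fun prev => (spec prev).choose_spec.2
  have hmono : StrictMono e := by
    apply strictMono_nat_of_lt_succ
    intro n
    exact hpick1 (E (n + 1)) (e n) (by rw [hE n]; simp)
  have hNoOne : ∀ n, ∀ l : List ℕ, l.Sublist (E n) → l ≠ [] → (l.map g).prod ≠ 1 := by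
    intro n
    induction n with
    | zero => intro l hl hne; rw [List.sublist_nil.1 hl] at hne; exact absurd rfl hne
    | succ n ih =>
      intro l hl hne
      rw [hE n, List.sublist_append_iff] at hl
      obtain ⟨l₁, l₂, rfl, h₁, h₂⟩ := hl
      rcases List.sublist_singleton.1 h₂ with rfl | rfl
      · rw [List.append_nil] at *
        exact ih l₁ h₁ hne
      · rw [List.map_append, List.prod_append]
        simpa using hpick2 (E n) l₁ h₁
  have hErange : ∀ n, E n = (List.range n).map e := by
    intro n
    induction n with
    | zero => rfl
    | succ n ih => rw [hE n, List.range_succ, List.map_append, ih]; rfl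
  refine ⟨e, hmono, fun l hne hc => ?_⟩
  have hp : l.Pairwise (· < ·) := List.isChain_iff_pairwise.1 hc
  set N := l.getLast hne + 1 with hN
  have hbound : ∀ x ∈ l, x < N := by
    intro x hx
    have hsplit := List.dropLast_append_getLast hne
    rw [← hsplit] at hx hp
    rcases List.mem_append.1 hx with hx | hx
    · have hxy : x < l.getLast hne :=
        (List.pairwise_append.1 hp).2.2 x hx (l.getLast hne) (by simp)
      omega
    · simp at hx; omega
  have hsub : (l.map e).Sublist (E N) := by
    rw [hErange N]
    exact List.Sublist.map e (pairwise_lt_sublist_range N l hp hbound)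
  refine hNoOne N (l.map e) hsub (by simpa using hne)

section Zset

variable (g b : ℕ → G)

def Zset (t : ℕ) : Set G :=
  {x | ∃ l : List ℕ, ∃ hl : l ≠ [], l.Chain' (· < ·) ∧ (∀ i ∈ l, t ≤ i) ∧
    x = (l.map g).prod * b (l.getLast hl)}

lemma Zset_zero : Zset g b 0 = PiecewiseShiftedFP g b := by
  ext x
  constructor
  · rintro ⟨l, hl, hc, _, rfl⟩; exact ⟨l, hl, hc, rfl⟩
  · rintro ⟨l, hl, hc, rfl⟩; exact ⟨l, hl, hc, fun i _ => Nat.zero_le i, rfl⟩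

variable {g b}

lemma Zset_anti {s t : ℕ} (hst : s ≤ t) : Zset g b t ⊆ Zset g b s := by
  rintro x ⟨l, hl, hc, hlow, rfl⟩
  exact ⟨l, hl, hc, fun i hi => le_trans hst (hlow i hi), rfl⟩

lemma Zset_single {m t : ℕ} (h : t ≤ m) : g m * b m ∈ Zset g b t := by
  refine ⟨[m], by simp, by simp [List.Chain'], by simpa using h, by simp⟩

lemma Zset_decomp {t : ℕ} {z : G} (hz : z ∈ Zset g b t) :
    ∃ m, t ≤ m ∧ ∃ w, z = g m * w ∧ (w = b m ∨ w ∈ Zset g b (m + 1)) := by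
  obtain ⟨l, hl, hc, hlow, rfl⟩ := hz
  cases l with
  | nil => exact absurd rfl hl
  | cons a tl =>
    refine ⟨a, hlow a (by simp), ?_⟩
    cases tl with
    | nil => exact ⟨b a, by simp, Or.inl rfl⟩
    | cons a' tl' =>
      have htlne : (a' :: tl') ≠ [] := by simp
      refine ⟨((a' :: tl').map g).prod * b ((a' :: tl').getLast htlne), ?_, Or.inr ?_⟩
      · rw [List.getLast_cons htlne]
        simp [mul_assoc]
      · refine ⟨a' :: tl', htlne, (List.isChain_cons.1 hc).2, ?_, rfl⟩
        have hp := List.isChain_iff_pairwise.1 hc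
        intro i hi
        have : a < i := (List.pairwise_cons.1 hp).1 i hi
        omega

lemma Zset_prepend {l : List ℕ} {s t : ℕ} {z : G} (hc : l.Chain' (· < ·))
    (hlow : ∀ i ∈ l, s ≤ i) (hhigh : ∀ i ∈ l, i < t) (hst : s ≤ t)
    (hz : z ∈ Zset g b t) : (l.map g).prod * z ∈ Zset g b s := by
  obtain ⟨l', hl', hc', hlow', rfl⟩ := hz
  have hl'ne : l ++ l' ≠ [] := by simp [hl']
  refine ⟨l ++ l', hl'ne, ?_, ?_, ?_⟩
  · refine List.isChain_append.2 ⟨hc, hc', ?_⟩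
    intro x hx y hy
    have hxl : x ∈ l := List.mem_of_mem_getLast? hx
    have hyl : y ∈ l' := List.mem_of_mem_head? hy
    exact lt_of_lt_of_le (hhigh x hxl) (hlow' y hyl)
  · intro i hi
    rcases List.mem_append.1 hi with hi | hi
    · exact hlow i hi
    · exact le_trans hst (hlow' i hi)
  · rw [List.map_append, List.prod_append, mul_assoc, List.getLast_append_of_ne_nil _ hl']

end Zset

lemma companion_infinite (g' b' : ℕ → G) (hg' : Function.Injective g')
    (hGood : ∀ l : List ℕ, l ≠ [] → l.Chain' (· < ·) → (l.map g').prod ≠ 1)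
    (p : Ultrafilter G) (hfree : ∀ B : Set G, B ∈ p → B.Infinite)
    (hX : Zset g' b' 0 ∈ p) :
    ¬ (Ultracompanion p (Zset g' b' 0)).Finite := by
  classical
  intro hΔ
  set X := Zset g' b' 0 with hXdef
  set H : Set G := {h : G | (fun x : G => h * x) ⁻¹' X ∈ p} with hHdef
  have hHfin : H.Finite := by
    have heq : H = (fun h : G => Ultrafilter.map (fun x => h * x) p) ⁻¹' (Ultracompanion p X) := by
      ext h
      constructor
      · intro hh
        exact ⟨h, rfl, (Ultrafilter.mem_map).2 hh⟩
      · rintro ⟨h', heq', hmem'⟩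
        exact (Ultrafilter.mem_map).1 hmem'
    rw [heq]
    exact hΔ.preimage (Function.Injective.injOn (map_mul_left_injective p))
  let thr : List ℕ → ℕ := fun l => l.getLast?.elim 0 Nat.succ
  have hthr_concat : ∀ (l : List ℕ) (m : ℕ), thr (l ++ [m]) = m + 1 := by
    intro l m
    simp [thr, List.getLast?_concat]
  have main : ∀ k : ℕ, ∃ (l : List ℕ) (V : Set G), l.Chain' (· < ·) ∧ l.length = k ∧
      (∀ i ∈ l, i < thr l) ∧ V ∈ p ∧
      ∀ x ∈ V, ∃ z ∈ Zset g' b' (thr l), x = (l.map g').prod * z := by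
    intro k
    induction k with
    | zero =>
      refine ⟨[], X, by simp [List.Chain'], rfl, by simp, hX, fun x hx => ⟨x, ?_, by simp⟩⟩
      simpa [thr] using hx
    | succ k ih =>
      obtain ⟨l, V, hc, hlen, hhigh, hVp, hVprop⟩ := ih
      set t := thr l with ht
      set c := (l.map g').prod with hcdef
      set W : ℕ → Set G := fun m => {x ∈ V | t ≤ m ∧ ∃ w, x = c * (g' m * w) ∧
        (w = b' m ∨ w ∈ Zset g' b' (m + 1))} with hW
      have hcover : ∀ x ∈ V, ∃ m, x ∈ W m := by
        intro x hx
        obtain ⟨z, hz, hxz⟩ := hVprop x hx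
        obtain ⟨m, htm, w, hzw, hw⟩ := Zset_decomp hz
        exact ⟨m, hx, htm, w, by rw [hxz, hzw], hw⟩
      by_cases hcase : ∃ m, W m ∈ p
      · obtain ⟨m, hWm⟩ := hcase
        have htm : t ≤ m := by
          obtain ⟨x, hx⟩ := (hfree _ hWm).nonempty
          exact hx.2.1
        have hnotpt : ({c * (g' m * b' m)}ᶜ : Set G) ∈ p := by
          apply Ultrafilter.compl_mem_iff_notMem.2
          intro hmem
          exact (hfree _ hmem) (Set.finite_singleton _)
        refine ⟨l ++ [m], W m ∩ {c * (g' m * b' m)}ᶜ, ?_, by simp [hlen], ?_,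
          Filter.inter_mem hWm hnotpt, ?_⟩
        · refine List.isChain_append.2 ⟨hc, by simp, ?_⟩
          intro x hx y hy
          simp only [List.head?_cons, Option.mem_some_iff] at hy
          subst hy
          exact lt_of_lt_of_le (hhigh x (List.mem_of_mem_getLast? hx)) htm
        · intro i hi
          rw [hthr_concat]
          rcases List.mem_append.1 hi with hi | hi
          · have := hhigh i hi; omega
          · simp at hi; omega
        · intro x hx
          obtain ⟨⟨hxV, _, w, hxw, hw⟩, hxne⟩ := hx
          rcases hw with rfl | hwZ
          · exact absurd hxw hxne
          · refine ⟨w, by rw [hthr_concat]; exact hwZ, ?_⟩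
            rw [List.map_append, List.prod_append, hxw]
            simp [mul_assoc, hcdef]
      · push_neg at hcase
        exfalso
        refine Set.infinite_of_injective_forall_mem
          (f := fun j : ℕ => (c * g' (j + t)) * c⁻¹) ?_ ?_ hHfin
        · intro u v huv
          simp only [mul_left_inj, mul_right_inj] at huv
          have := hg' huv
          omega
        · intro j
          show (fun x : G => ((c * g' (j + t)) * c⁻¹) * x) ⁻¹' X ∈ p
          have hT : V ∩ ⋂ m ∈ Finset.range (j + t + 1), (W m)ᶜ ∈ p :=
            Filter.inter_mem hVp ((Filter.biInter_finset_mem _).2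
              fun m _ => Ultrafilter.compl_mem_iff_notMem.2 (hcase m))
          refine Filter.mem_of_superset hT ?_
          rintro x ⟨hxV, hxI⟩
          obtain ⟨m, hxm⟩ := hcover x hxV
          have hmge : j + t + 1 ≤ m := by
            by_contra hlt
            have : x ∈ (W m)ᶜ := by
              have := Set.mem_iInter₂.1 hxI m (Finset.mem_range.2 (by omega))
              exact this
            exact this hxm
          obtain ⟨-, htm, w, hxw, hw⟩ := hxm
          have h1 : g' m * w ∈ Zset g' b' (j + t + 1) := by
            rcases hw with rfl | hwZ
            · exact Zset_single hmge
            · have := Zset_prepend (g := g') (b := b') (l := [m]) (s := j + t + 1) (t := m + 1)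
                (by simp [List.Chain']) (by simpa using hmge) (by simp) (by omega) hwZ
              simpa using this
          have h2 : g' (j + t) * (g' m * w) ∈ Zset g' b' t := by
            have := Zset_prepend (g := g') (b := b') (l := [j + t]) (s := t) (t := j + t + 1)
              (by simp [List.Chain']) (by simp) (by simp) (by omega) h1
            simpa using this
          have h3 : c * (g' (j + t) * (g' m * w)) ∈ X := by
            exact Zset_prepend (g := g') (b := b') (l := l) (s := 0) (t := t)
              hc (fun i _ => Nat.zero_le i) hhigh (Nat.zero_le t) h2
          show ((c * g' (j + t)) * c⁻¹) * x ∈ X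
          rw [hxw]
          have harr : ((c * g' (j + t)) * c⁻¹) * (c * (g' m * w)) =
              c * (g' (j + t) * (g' m * w)) := by
            group
          rw [harr]
          exact h3
  -- final counting
  obtain ⟨l, V, hc, hlen, hhigh, hVp, hVprop⟩ := main (hHfin.toFinset.card + 1)
  set c := (l.map g').prod with hcdef
  set F : ℕ → G := fun j => ((l.take j).map g').prod * c⁻¹ with hF
  have hFH : ∀ j ∈ Finset.range (hHfin.toFinset.card + 1), F j ∈ hHfin.toFinset := by
    intro j hj
    rw [Set.Finite.mem_toFinset]
    show (fun x : G => (((l.take j).map g').prod * c⁻¹) * x) ⁻¹' X ∈ p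
    refine Filter.mem_of_superset hVp ?_
    intro x hx
    obtain ⟨z, hz, rfl⟩ := hVprop x hx
    show (((l.take j).map g').prod * c⁻¹) * (c * z) ∈ X
    have harr : (((l.take j).map g').prod * c⁻¹) * (c * z) = ((l.take j).map g').prod * z := by
      group
    rw [harr]
    show _ ∈ Zset g' b' 0
    have hcj : (l.take j).Chain' (· < ·) := by
      rw [List.Chain', List.isChain_iff_pairwise] at hc ⊢
      exact hc.sublist (List.take_sublist j l)
    exact Zset_prepend (g := g') (b := b') (s := 0) (t := thr l) hcj
      (fun i _ => Nat.zero_le i) (fun i hi => hhigh i (List.mem_of_mem_take hi))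
      (Nat.zero_le _) hz
  have hFinj : Set.InjOn F ↑(Finset.range (hHfin.toFinset.card + 1)) := by
    have haux : ∀ u v : ℕ, u < v → v ≤ hHfin.toFinset.card → F u ≠ F v := by
      intro u v huv hvk heq
      have hprods : ((l.take u).map g').prod = ((l.take v).map g').prod :=
        mul_right_cancel heq
      have hsplit : l.take v = l.take u ++ (l.drop u).take (v - u) := by
        conv_lhs => rw [show v = u + (v - u) by omega]
        exact List.take_add (l := l) (i := u) (j := v - u)
      set mid := (l.drop u).take (v - u) with hmid
      rw [hsplit, List.map_append, List.prod_append] at hprods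
      have hmid1 : (mid.map g').prod = 1 := by
        have := hprods.symm
        rwa [mul_eq_left] at this
      have hmidne : mid ≠ [] := by
        have hlength : mid.length = min (v - u) (l.length - u) := by
          simp [hmid, List.length_take, List.length_drop]
        intro hnil
        rw [hnil] at hlength
        simp at hlength
        omega
      have hmidc : mid.Chain' (· < ·) := by
        rw [List.Chain', List.isChain_iff_pairwise] at hc ⊢
        exact hc.sublist ((List.take_sublist _ _).trans (List.drop_sublist _ _))
      exact hGood mid hmidne hmidc hmid1
    intro u hu v hv heq
    rcases lt_trichotomy u v with h | h | h
    · exact absurd heq (haux u v h (by simpa using Nat.lt_succ_iff.1 (by simpa using hv)))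
    · exact h
    · exact absurd heq.symm (haux v u h (by simpa using Nat.lt_succ_iff.1 (by simpa using hu)))
  have hcard := Finset.card_le_card_of_injOn F hFH hFinj
  simp at hcard

lemma dir1 {A : Set G} (g b : ℕ → G) (hg : Function.Injective g)
    (hsub : PiecewiseShiftedFP g b ⊆ A) : ¬ IsScatteredSub A := by
  classical
  obtain ⟨e, hmono, hGood'⟩ := exists_good_subseq g hg
  set g' : ℕ → G := fun n => g (e n) with hg'def
  set b' : ℕ → G := fun n => b (e n) with hb'def
  have hg'inj : Function.Injective g' := fun u v h => hmono.injective (hg h)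
  have hGood : ∀ l : List ℕ, l ≠ [] → l.Chain' (· < ·) → (l.map g').prod ≠ 1 := by
    intro l hne hc
    have : l.map g' = (l.map e).map g := by
      rw [List.map_map]
      rfl
    rw [this]
    exact hGood' l hne hc
  set X := Zset g' b' 0 with hXdef
  have hXsub : X ⊆ A := by
    rw [hXdef, Zset_zero]
    rintro x ⟨l, hl, hc, rfl⟩
    apply hsub
    have hmapne : l.map e ≠ [] := by simpa using hl
    refine ⟨l.map e, hmapne, ?_, ?_⟩
    · exact (List.isChain_map e).2 (hc.imp fun a b hab => hmono hab)
    · rw [List.getLast_map, List.map_map]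
      rfl
  have hXinf : X.Infinite := by
    by_contra hfin
    rw [Set.not_infinite] at hfin
    set n := hfin.toFinset.card with hn
    have hmem : ∀ i ∈ Finset.range (n + 1),
        g' i * (g' (n + 1) * b' (n + 1)) ∈ hfin.toFinset := by
      intro i hi
      rw [Set.Finite.mem_toFinset]
      refine ⟨[i, n + 1], by simp, ?_, ?_⟩
      · simp only [List.Chain', List.isChain_cons_cons, List.isChain_singleton, and_true]
        exact Finset.mem_range.1 hi
      · simp [mul_assoc]
    have hinj : Set.InjOn (fun i : ℕ => g' i * (g' (n + 1) * b' (n + 1)))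
        ↑(Finset.range (n + 1)) := by
      intro u _ v _ huv
      simp only [mul_left_inj] at huv
      exact hg'inj huv
    have := Finset.card_le_card_of_injOn _ hmem hinj
    simp [hn] at this
  intro hsc
  obtain ⟨p, hpfree, hXp, hfin⟩ := hsc X hXsub hXinf
  exact companion_infinite g' b' hg'inj hGood p hpfree hXp hfin

lemma mem_ultra_mul {M : Type*} [Semigroup M] {U V : Ultrafilter M} {s : Set M} :
    s ∈ U * V ↔ {x | {y | x * y ∈ s} ∈ V} ∈ U := Iff.rfl

lemma isFreeUltra_mul {M : Type*} [Semigroup M] {q r : Ultrafilter M}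
    (hr : IsFreeUltra r) (hcan : ∀ x : M, Function.Injective (fun y => x * y)) :
    IsFreeUltra (q * r) := by
  intro B hB
  rw [mem_ultra_mul] at hB
  obtain ⟨x, hx⟩ := Ultrafilter.nonempty_of_mem hB
  have hinf : ({y | x * y ∈ B} : Set M).Infinite := hr _ hx
  have : ((fun y => x * y) '' {y | x * y ∈ B}).Infinite := hinf.image ((hcan x).injOn)
  refine this.mono ?_
  rintro z ⟨y, hy, rfl⟩
  exact hy

lemma isFreeUltra_iff_compl_singleton {α : Type*} {r : Ultrafilter α} :
    IsFreeUltra r ↔ ∀ x : α, ({x}ᶜ : Set α) ∈ r := by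
  constructor
  · intro hr x
    rw [Ultrafilter.compl_mem_iff_notMem]
    intro hx
    exact (hr _ hx) (Set.finite_singleton x)
  · intro hr B hB
    by_contra hBfin
    rw [Set.not_infinite] at hBfin
    have hcompl : Bᶜ ∈ r := by
      have : Bᶜ = ⋂ x ∈ B, ({x}ᶜ : Set α) := by
        ext z
        simp only [Set.mem_compl_iff, Set.mem_iInter, Set.mem_singleton_iff]
        exact ⟨fun h i hi e => h (e ▸ hi), fun h hz => h z hz rfl⟩
      rw [this]
      exact (Filter.biInter_mem hBfin).2 fun x _ => hr x
    obtain ⟨z, hz1, hz2⟩ := Ultrafilter.nonempty_of_mem (Filter.inter_mem hB hcompl)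
    exact hz2 hz1

lemma isClosed_free {α : Type*} : IsClosed {r : Ultrafilter α | IsFreeUltra r} := by
  have : {r : Ultrafilter α | IsFreeUltra r} = ⋂ x : α, {r | ({x}ᶜ : Set α) ∈ r} := by
    ext r
    simp only [Set.mem_iInter, Set.mem_setOf_eq]
    exact isFreeUltra_iff_compl_singleton
  rw [this]
  exact isClosed_iInter fun x => ultrafilter_isClosed_basic _

lemma galvin_glazer {u : Ultrafilter G} (hu : IsFreeUltra u) (hidem : u * u = u)
    {D : Set G} (hD : D ∈ u) :
    ∃ g : ℕ → G, Function.Injective g ∧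
      ∀ l : List ℕ, l ≠ [] → l.Chain' (· < ·) → (l.map g).prod ∈ D := by
  classical
  set Q : G → Set G → Set G := fun x S => {y | x * y ∈ S} with hQ
  set star : Set G → Set G := fun S => S ∩ {x | Q x S ∈ u} with hstar
  have hstar_mem : ∀ S : Set G, S ∈ u → star S ∈ u := by
    intro S hS
    have h2 : {x | Q x S ∈ u} ∈ u := by
      have : S ∈ u * u := by rw [hidem]; exact hS
      rw [mem_ultra_mul] at this
      exact this
    exact Filter.inter_mem hS h2
  have hQassoc : ∀ (x y : G) (S : Set G), Q (x * y) S = Q y (Q x S) := by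
    intro x y S
    ext z
    simp [hQ, mul_assoc]
  have hstar_Q : ∀ S : Set G, S ∈ u → ∀ x ∈ star S, Q x (star S) ∈ u := by
    intro S hS x hx
    have hQx : Q x S ∈ u := hx.2
    have : Q x (star S) = star (Q x S) := by
      ext y
      simp only [hstar, hQ, Set.mem_inter_iff, Set.mem_setOf_eq]
      simp [mul_assoc]
    rw [this]
    exact hstar_mem _ hQx
  set pick : Set G → List G → G := fun S prev =>
    if h : ∃ v, v ∈ star S ∧ v ∉ prev then h.choose else 1 with hpickdef
  have hpick : ∀ (S : Set G) (prev : List G), S ∈ u →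
      pick S prev ∈ star S ∧ pick S prev ∉ prev := by
    intro S prev hS
    have hex : ∃ v, v ∈ star S ∧ v ∉ prev := by
      have hinf : (star S).Infinite := hu _ (hstar_mem S hS)
      have : (star S \ {v | v ∈ prev}).Infinite := by
        refine hinf.diff ?_
        have : {v | v ∈ prev} = ↑prev.toFinset := by ext v; simp
        rw [this]
        exact prev.toFinset.finite_toSet
      obtain ⟨v, hv⟩ := this.nonempty
      exact ⟨v, hv.1, hv.2⟩
    simp only [hpickdef, dif_pos hex]
    exact hex.choose_spec
  set P : ℕ → Set G × List G := fun n => Nat.rec (D, [])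
    (fun _ st => (star st.1 ∩ Q (pick st.1 st.2) (star st.1), st.2 ++ [pick st.1 st.2])) n
    with hP
  set s : ℕ → Set G := fun n => (P n).1 with hs
  set gs : ℕ → List G := fun n => (P n).2 with hgs
  set g : ℕ → G := fun n => pick (s n) (gs n) with hgdef
  have hPsucc : ∀ n, P (n + 1) = (star (s n) ∩ Q (g n) (star (s n)), gs n ++ [g n]) :=
    fun n => rfl
  have hmem : ∀ n, s n ∈ u := by
    intro n
    induction n with
    | zero => exact hD
    | succ n ih =>
      have h1 := hstar_mem (s n) ih
      have h2 := hstar_Q (s n) ih (g n) (hpick _ _ ih).1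
      show (P (n+1)).1 ∈ u
      rw [hPsucc n]
      exact Filter.inter_mem h1 h2
  have hgmem : ∀ n, g n ∈ star (s n) := fun n => (hpick _ _ (hmem n)).1
  have hgsval : ∀ n, gs n = (List.range n).map g := by
    intro n
    induction n with
    | zero => rfl
    | succ n ih =>
      show (P (n+1)).2 = _
      rw [hPsucc n, List.range_succ, List.map_append, ← ih]
      rfl
  have hssucc : ∀ n, s (n + 1) = star (s n) ∩ Q (g n) (star (s n)) := by
    intro n
    show (P (n+1)).1 = _
    rw [hPsucc n]
  have hsub1 : ∀ n, s (n + 1) ⊆ s n := by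
    intro n
    rw [hssucc n]
    exact Set.Subset.trans Set.inter_subset_left Set.inter_subset_left
  have hmono : ∀ m n, m ≤ n → s n ⊆ s m := by
    intro m n hmn
    induction hmn with
    | refl => exact Set.Subset.refl _
    | @step k hk ih => exact Set.Subset.trans (hsub1 k) ih
  have hinj : Function.Injective g := by
    have key : ∀ m n, m < n → g n ≠ g m := by
      intro m n hmn heq
      have h1 : g n ∉ gs n := (hpick _ _ (hmem n)).2
      apply h1
      rw [hgsval n, heq]
      exact List.mem_map_of_mem (List.mem_range.2 hmn)
    intro a b hab
    rcases lt_trichotomy a b with h | h | h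
    · exact absurd hab.symm (key a b h)
    · exact h
    · exact absurd hab (key b a h)
  have aux : ∀ (l : List ℕ) (a : ℕ), (a :: l).Chain' (· < ·) →
      ((a :: l).map g).prod ∈ star (s a) := by
    intro l
    induction l with
    | nil => intro a _; simpa using hgmem a
    | cons b l ih =>
      intro a hc
      have hab : a < b := List.isChain_cons_cons.1 hc |>.1
      have hbc : (b :: l).Chain' (· < ·) := (List.isChain_cons_cons.1 hc).2
      have hprod : ((b :: l).map g).prod ∈ star (s b) := ih b hbc
      have h1 : ((b :: l).map g).prod ∈ Q (g a) (star (s a)) := by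
        have hsb : s b ⊆ s (a + 1) := hmono (a+1) b hab
        have : star (s b) ⊆ s b := Set.inter_subset_left
        have h2 : ((b :: l).map g).prod ∈ s (a + 1) := hsb (this hprod)
        rw [hssucc a] at h2
        exact h2.2
      show (g a * ((b :: l).map g).prod) ∈ star (s a)
      exact h1
  refine ⟨g, hinj, fun l hl hc => ?_⟩
  cases l with
  | nil => exact absurd rfl hl
  | cons a l' =>
    have := aux l' a hc
    have h1 : star (s a) ⊆ s a := Set.inter_subset_left
    have h2 : s a ⊆ s 0 := hmono 0 a (Nat.zero_le a)
    exact h2 (h1 this)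

lemma dir2 {A : Set G} (hns : ¬ IsScatteredSub A) :
    ∃ g b : ℕ → G, Function.Injective g ∧ PiecewiseShiftedFP g b ⊆ A := by
  classical
  rw [IsScatteredSub] at hns
  push_neg at hns
  obtain ⟨X, hXA, hXinf, hprop⟩ := hns
  -- hprop : ∀ p, IsFreeUltra p → X ∈ p → ¬ (Ultracompanion p X).Finite
  set Y : Set (Ultrafilter G) := {r | IsFreeUltra r ∧ X ∈ r} with hY
  have hYne : Y.Nonempty := by
    obtain ⟨p, h1, h2⟩ := exists_free_ultra hXinf
    exact ⟨p, h1, h2⟩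
  have hYclosed : IsClosed Y := by
    have : Y = {r : Ultrafilter G | IsFreeUltra r} ∩ {r | X ∈ r} := rfl
    rw [this]
    exact isClosed_free.inter (ultrafilter_isClosed_basic X)
  have hstep : ∀ r ∈ Y, ∃ q, IsFreeUltra q ∧ q * r ∈ Y := by
    rintro r ⟨hrfree, hXr⟩
    have hΔ : (Ultracompanion r X).Infinite := hprop r hrfree hXr
    set D : Set G := {h | (fun x => h * x) ⁻¹' X ∈ r} with hD
    have hDinf : D.Infinite := by
      have hsub : Ultracompanion r X ⊆ (fun h : G => Ultrafilter.map (fun x => h * x) r) '' D := by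
        rintro q ⟨h, rfl, hq⟩
        exact ⟨h, (Ultrafilter.mem_map).1 hq, rfl⟩
      exact Set.Infinite.of_image _ (hΔ.mono hsub)
    obtain ⟨q, hqfree, hDq⟩ := exists_free_ultra hDinf
    refine ⟨q, hqfree, isFreeUltra_mul hrfree (fun x => mul_right_injective x), ?_⟩
    rw [mem_ultra_mul]
    exact Filter.mem_of_superset hDq fun h hh => hh
  -- Zorn for a minimal element of 𝒞
  set 𝒞 : Set (Set (Ultrafilter G)) :=
    {K | K ⊆ Y ∧ K.Nonempty ∧ IsClosed K ∧ ∀ r ∈ K, ∃ q, IsFreeUltra q ∧ q * r ∈ K} with h𝒞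
  have hY𝒞 : Y ∈ 𝒞 := ⟨Set.Subset.refl Y, hYne, hYclosed, hstep⟩
  have hzorn : ∃ K₀ ∈ 𝒞, ∀ K ∈ 𝒞, K ⊆ K₀ → K = K₀ := by
    have hch : ∀ c ⊆ 𝒞, IsChain (· ⊆ ·) c → ∃ lb ∈ 𝒞, ∀ s ∈ c, lb ⊆ s := ?_
    · obtain ⟨K₀, hK₀⟩ := zorn_superset 𝒞 hch
      exact ⟨K₀, hK₀.prop, fun K hK hsub => le_antisymm hsub (hK₀.2 hK hsub)⟩
    intro c hc𝒞 hchain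
    rcases c.eq_empty_or_nonempty with rfl | hcne
    · exact ⟨Y, hY𝒞, by simp⟩
    refine ⟨⋂₀ c, ⟨?_, ?_, ?_, ?_⟩, fun K hK => Set.sInter_subset_of_mem hK⟩
    · obtain ⟨K, hK⟩ := hcne
      exact (Set.sInter_subset_of_mem hK).trans (hc𝒞 hK).1
    · haveI : Nonempty c := hcne.to_subtype
      have hdir : DirectedOn (· ⊇ ·) c := by
        intro a ha b hb
        rcases eq_or_ne a b with rfl | hne
        · exact ⟨a, ha, Set.Subset.refl a, Set.Subset.refl a⟩
        · rcases hchain ha hb hne with h | h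
          · exact ⟨a, ha, Set.Subset.refl a, h⟩
          · exact ⟨b, hb, h, Set.Subset.refl b⟩
      exact IsCompact.nonempty_sInter_of_directed_nonempty_isCompact_isClosed
        hdir (fun K hK => (hc𝒞 hK).2.1)
        (fun K hK => (hc𝒞 hK).2.2.1.isCompact) (fun K hK => (hc𝒞 hK).2.2.1)
    · exact isClosed_sInter fun K hK => (hc𝒞 hK).2.2.1
    · intro r hr
      haveI : Nonempty c := hcne.to_subtype
      set t : c → Set (Ultrafilter G) :=
        fun K => {q | IsFreeUltra q ∧ q * r ∈ (K : Set (Ultrafilter G))} with hts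
      have htclosed : ∀ K : c, IsClosed (t K) := by
        intro K
        have : t K = {q : Ultrafilter G | IsFreeUltra q} ∩ (· * r) ⁻¹' (K : Set (Ultrafilter G)) := rfl
        rw [this]
        exact isClosed_free.inter (IsClosed.preimage (Ultrafilter.continuous_mul_left r)
          ((hc𝒞 K.2).2.2.1))
      have htne : ∀ K : c, (t K).Nonempty := by
        intro K
        obtain ⟨q, hq1, hq2⟩ := (hc𝒞 K.2).2.2.2 r (Set.sInter_subset_of_mem K.2 hr)
        exact ⟨q, hq1, hq2⟩
      have htdir : Directed (· ⊇ ·) t := by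
        intro K K'
        rcases eq_or_ne (K : Set (Ultrafilter G)) K' with he | hne
        · exact ⟨K, Set.Subset.refl _, by rw [hts]; intro q hq; exact ⟨hq.1, he ▸ hq.2⟩⟩
        · rcases hchain K.2 K'.2 hne with h | h
          · exact ⟨K, Set.Subset.refl _, fun q hq => ⟨hq.1, h hq.2⟩⟩
          · exact ⟨K', fun q hq => ⟨hq.1, h hq.2⟩, Set.Subset.refl _⟩
      obtain ⟨q, hq⟩ := IsCompact.nonempty_iInter_of_directed_nonempty_isCompact_isClosed
        t htdir htne (fun K => (htclosed K).isCompact) htclosed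
      rw [Set.mem_iInter] at hq
      refine ⟨q, (hq ⟨_, hcne.choose_spec⟩).1, ?_⟩
      rw [Set.mem_sInter]
      intro K hK
      exact (hq ⟨K, hK⟩).2
  obtain ⟨K₀, hK₀𝒞, hK₀min⟩ := hzorn
  obtain ⟨hK₀Y, hK₀ne, hK₀closed, hK₀prop⟩ := hK₀𝒞
  obtain ⟨r, hrK₀⟩ := hK₀ne
  -- the image Φ is again in 𝒞, so it equals K₀ by minimality
  set Qr : Set (Ultrafilter G) := {q | IsFreeUltra q ∧ q * r ∈ K₀} with hQr
  have hQrclosed : IsClosed Qr := by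
    have : Qr = {q : Ultrafilter G | IsFreeUltra q} ∩ (· * r) ⁻¹' K₀ := rfl
    rw [this]
    exact isClosed_free.inter (IsClosed.preimage (Ultrafilter.continuous_mul_left r) hK₀closed)
  set Φ : Set (Ultrafilter G) := (· * r) '' Qr with hΦ
  have hΦ𝒞 : Φ ∈ 𝒞 := by
    refine ⟨?_, ?_, ?_, ?_⟩
    · rintro s ⟨q, hq, rfl⟩
      exact hK₀Y hq.2
    · obtain ⟨q, hq1, hq2⟩ := hK₀prop r hrK₀
      exact ⟨q * r, q, ⟨hq1, hq2⟩, rfl⟩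
    · exact (hQrclosed.isCompact.image (Ultrafilter.continuous_mul_left r)).isClosed
    · rintro s ⟨q, hq, rfl⟩
      obtain ⟨q', hq'1, hq'2⟩ := hK₀prop (q * r) hq.2
      refine ⟨q', hq'1, ⟨q' * q, ⟨isFreeUltra_mul hq.1 (fun x => mul_right_injective x), ?_⟩, ?_⟩⟩
      · show q' * q * r ∈ K₀
        rw [mul_assoc]; exact hq'2
      · show q' * q * r = q' * (q * r)
        rw [mul_assoc]
  have hΦsub : Φ ⊆ K₀ := by
    rintro s ⟨q, hq, rfl⟩
    exact hq.2
  have hΦeq : Φ = K₀ := hK₀min Φ hΦ𝒞 hΦsub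
  have hrΦ : r ∈ Φ := hΦeq ▸ hrK₀
  obtain ⟨q₀, hq₀, hq₀r⟩ := hrΦ
  -- the stabilizer subsemigroup
  set T : Set (Ultrafilter G) := {q | IsFreeUltra q ∧ q * r = r} with hT
  have hTne : T.Nonempty := ⟨q₀, hq₀.1, hq₀r⟩
  have hTclosed : IsClosed T := by
    have : T = {q : Ultrafilter G | IsFreeUltra q} ∩ (· * r) ⁻¹' {r} := rfl
    rw [this]
    exact isClosed_free.inter (IsClosed.preimage (Ultrafilter.continuous_mul_left r)
      isClosed_singleton)
  have hTmul : ∀ q₁ ∈ T, ∀ q₂ ∈ T, q₁ * q₂ ∈ T := by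
    rintro q₁ ⟨h1f, h1r⟩ q₂ ⟨h2f, h2r⟩
    refine ⟨isFreeUltra_mul h2f (fun x => mul_right_injective x), ?_⟩
    rw [mul_assoc, h2r, h1r]
  obtain ⟨u, huT, huidem⟩ := exists_idempotent_in_compact_subsemigroup
    (fun s => Ultrafilter.continuous_mul_left s) T hTne hTclosed.isCompact hTmul
  obtain ⟨hufree, hur⟩ := huT
  -- D ∈ u
  have hrY : r ∈ Y := hK₀Y hrK₀
  obtain ⟨hrfree, hXr⟩ := hrY
  set D : Set G := {h : G | {y | h * y ∈ X} ∈ r} with hD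
  have hDu : D ∈ u := by
    have : X ∈ u * r := by rw [hur]; exact hXr
    rw [mem_ultra_mul] at this
    exact this
  obtain ⟨g, hginj, hgprod⟩ := galvin_glazer hufree huidem hDu
  -- choose the shift elements
  have hTn : ∀ n : ℕ, (X ∩ ⋂ l ∈ (List.range n).sublists.toFinset,
      (fun x => (l.map g).prod * x) ⁻¹' X) ∈ r := by
    intro n
    refine Filter.inter_mem hXr ((Filter.biInter_finset_mem _).2 fun l hl => ?_)
    rcases eq_or_ne l [] with rfl | hlne
    · simpa [Set.preimage] using hXr
    · have hlsub : l.Sublist (List.range n) := by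
        rw [List.mem_toFinset, List.mem_sublists] at hl
        exact hl
      have hlchain : l.Chain' (· < ·) :=
        List.isChain_iff_pairwise.2 ((List.pairwise_lt_range (n := n)).sublist hlsub)
      exact hgprod l hlne hlchain
  set y : ℕ → G := fun n => (Ultrafilter.nonempty_of_mem (hTn n)).choose with hy
  have hyspec : ∀ n, y n ∈ X ∩ ⋂ l ∈ (List.range n).sublists.toFinset,
      (fun x => (l.map g).prod * x) ⁻¹' X :=
    fun n => (Ultrafilter.nonempty_of_mem (hTn n)).choose_spec
  refine ⟨g, fun n => (g n)⁻¹ * y n, hginj, ?_⟩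
  rintro x ⟨l, hl, hc, rfl⟩
  apply hXA
  set m := l.getLast hl with hm
  set l' := l.dropLast with hl'
  have hsplit : l = l' ++ [m] := (List.dropLast_append_getLast hl).symm
  have hp : l.Pairwise (· < ·) := List.isChain_iff_pairwise.1 hc
  have hprodsplit : (l.map g).prod = (l'.map g).prod * g m := by
    conv_lhs => rw [hsplit]
    rw [List.map_append, List.prod_append]
    simp
  have harr : (l.map g).prod * ((g m)⁻¹ * y m) = (l'.map g).prod * y m := by
    rw [hprodsplit]
    group
  rw [harr]
  have hl'sub : l'.Sublist (List.range m) := by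
    apply pairwise_lt_sublist_range
    · rw [hsplit] at hp
      exact (List.pairwise_append.1 hp).1
    · intro x hx
      rw [hsplit] at hp
      exact (List.pairwise_append.1 hp).2.2 x hx m (by simp)
  have := (hyspec m).2
  rw [Set.mem_iInter₂] at this
  exact this l' (by rw [List.mem_toFinset, List.mem_sublists]; exact hl'sub)

end Proof

/-- For a subset `A` of an infinite group `G`, `A` is not scattered iff `A` contains
a piecewise shifted FP-set (with `g` injective). -/
theorem not_scattered_iff_contains_piecewiseShiftedFP
    {G : Type*} [Group G] [Infinite G] (A : Set G) :
    ¬ IsScatteredSub A ↔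
      ∃ g b : ℕ → G, Function.Injective g ∧ PiecewiseShiftedFP g b ⊆ A := by
  constructor
  · exact dir2
  · rintro ⟨g, b, hg, hsub⟩
    exact dir1 g b hg hsub
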